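/- With the notation above, the ℤ[ζₙ+ζₙ⁻¹]-module M_{o₁,o₂} = ℤ[ζₙ+ζₙ⁻¹]·o₁/(αδ−βγ) + ℤ[ζₙ+ζₙ⁻¹]·o₂/(αδ−βγ) is a ℤ-module of rank φ(n) (as an abelian group). -/

import Mathlib

open Polynomial IntermediateField

set_option maxHeartbeats 1000000
set_option synthInstance.maxHeartbeats 400000

lemma prf_norm_one {n : ℕ} (hn : 0 < n) {ζ : ℂ} (hζ : IsPrimitiveRoot ζ n) : ‖ζ‖ = 1 := by
  have h : ‖ζ‖ ^ n = 1 ^ n := by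
    rw [← norm_pow, hζ.pow_eq_one, norm_one, one_pow]
  exact (pow_left_inj₀ (norm_nonneg ζ) zero_le_one hn.ne').1 h

lemma theta_im {n : ℕ} (hn : 3 ≤ n) {ζ : ℂ} (hζ : IsPrimitiveRoot ζ n) : (ζ + ζ⁻¹).im = 0 := by
  rw [Complex.inv_eq_conj (prf_norm_one (by omega) hζ)]
  simp

lemma zeta_im_ne {n : ℕ} (hn : 3 ≤ n) {ζ : ℂ} (hζ : IsPrimitiveRoot ζ n) : ζ.im ≠ 0 := by
  intro h
  have hζ0 : ζ ≠ 0 := hζ.ne_zero (by omega)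
  have hconj : (starRingEnd ℂ) ζ = ζ := Complex.conj_eq_iff_im.2 h
  have h2 : ζ ^ 2 = 1 := by
    have h1 := Complex.inv_eq_conj (prf_norm_one (by omega) hζ)
    rw [hconj] at h1
    rw [sq]
    nth_rewrite 2 [← h1]
    exact mul_inv_cancel₀ hζ0
  have := Nat.le_of_dvd (by norm_num) (hζ.dvd_of_pow_eq_one 2 h2)
  omega

lemma real_memQ (θ : ℂ) (h : θ.im = 0) :
    ∀ x ∈ IntermediateField.adjoin ℚ ({θ} : Set ℂ), Complex.im x = 0 := by
  intro x hx
  have hle : IntermediateField.adjoin ℚ ({θ} : Set ℂ) ≤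
      Subfield.toIntermediateField (K := ℚ) Complex.ofRealHom.fieldRange
        (fun q => ⟨(q : ℝ), by simp⟩) := by
    rw [IntermediateField.adjoin_le_iff]
    rintro z rfl
    exact ⟨z.re, Complex.ext (by simp) (by simp [h])⟩
  obtain ⟨r, hr⟩ := hle hx
  rw [← hr]
  simp

lemma deg_theta {n : ℕ} (hn : 3 ≤ n) {ζ : ℂ} (hζ : IsPrimitiveRoot ζ n) :
    2 * (minpoly ℚ (ζ + ζ⁻¹)).natDegree = n.totient := by
  have hn0 : 0 < n := by omega
  have hζ0 : ζ ≠ 0 := hζ.ne_zero (by omega)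
  have hζint : IsIntegral ℚ ζ := (hζ.isIntegral hn0).tower_top
  have hθint : IsIntegral ℚ (ζ + ζ⁻¹) :=
    ((hζ.isIntegral hn0).add (hζ.inv.isIntegral hn0)).tower_top
  haveI : FiniteDimensional ℚ ℚ⟮ζ + ζ⁻¹⟯ := adjoin.finiteDimensional hθint
  have hζintF : IsIntegral ℚ⟮ζ + ζ⁻¹⟯ ζ := hζint.tower_top
  haveI : FiniteDimensional ℚ⟮ζ + ζ⁻¹⟯ ℚ⟮ζ + ζ⁻¹⟯⟮ζ⟯ := adjoin.finiteDimensional hζintF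
  have hK : Module.finrank ℚ ℚ⟮ζ⟯ = n.totient := by
    rw [IntermediateField.adjoin.finrank hζint, ← Polynomial.cyclotomic_eq_minpoly_rat hζ hn0,
      Polynomial.natDegree_cyclotomic]
  have hres : restrictScalars ℚ ℚ⟮ζ + ζ⁻¹⟯⟮ζ⟯ = ℚ⟮ζ⟯ := by
    erw [adjoin_adjoin_left]
    apply le_antisymm
    · rw [adjoin_le_iff]
      intro z hz
      simp only [Set.union_singleton, Set.mem_insert_iff, Set.mem_singleton_iff] at hz
      rcases hz with rfl | rfl
      · exact mem_adjoin_simple_self ℚ z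
      · exact add_mem (mem_adjoin_simple_self ℚ ζ) (inv_mem (mem_adjoin_simple_self ℚ ζ))
    · exact adjoin.mono _ _ _ (by simp)
  have hfr : Module.finrank ℚ ℚ⟮ζ + ζ⁻¹⟯⟮ζ⟯ = n.totient := by
    have h' : Module.finrank ℚ (restrictScalars ℚ ℚ⟮ζ + ζ⁻¹⟯⟮ζ⟯) = n.totient := by
      rw [hres]; exact hK
    exact h'
  have hdeg2 : Module.finrank ℚ⟮ζ + ζ⁻¹⟯ ℚ⟮ζ + ζ⁻¹⟯⟮ζ⟯ = 2 := by
    rw [IntermediateField.adjoin.finrank hζintF]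
    have hle2 : (minpoly ℚ⟮ζ + ζ⁻¹⟯ ζ).natDegree ≤ 2 := by
      have h0 : (X ^ 2 - C (AdjoinSimple.gen ℚ (ζ + ζ⁻¹)) * X + 1 :
          Polynomial ℚ⟮ζ + ζ⁻¹⟯) ≠ 0 := by
        intro h
        have h2 := congrArg (fun p => Polynomial.coeff p 2) h
        simp [Polynomial.coeff_one] at h2
      have haev : aeval ζ (X ^ 2 - C (AdjoinSimple.gen ℚ (ζ + ζ⁻¹)) * X + 1 :
          Polynomial ℚ⟮ζ + ζ⁻¹⟯) = 0 := by
        simp only [map_add, map_sub, map_mul, map_pow, map_one, aeval_X, aeval_C,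
          AdjoinSimple.algebraMap_gen]
        field_simp
        ring
      have hdle := minpoly.degree_le_of_ne_zero ℚ⟮ζ + ζ⁻¹⟯ ζ h0 haev
      have hdeg : (X ^ 2 - C (AdjoinSimple.gen ℚ (ζ + ζ⁻¹)) * X + 1 :
          Polynomial ℚ⟮ζ + ζ⁻¹⟯).degree ≤ 2 := by
        compute_degree
      exact natDegree_le_iff_degree_le.2 (hdle.trans hdeg)
    have hne1 : (minpoly ℚ⟮ζ + ζ⁻¹⟯ ζ).natDegree ≠ 1 := by
      intro h1
      have hone : Module.finrank ℚ⟮ζ + ζ⁻¹⟯ ℚ⟮ζ + ζ⁻¹⟯⟮ζ⟯ = 1 := by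
        rw [IntermediateField.adjoin.finrank hζintF, h1]
      rw [IntermediateField.finrank_eq_one_iff] at hone
      have hmem : ζ ∈ (⊥ : IntermediateField ℚ⟮ζ + ζ⁻¹⟯ ℂ) := by
        rw [← hone]; exact mem_adjoin_simple_self _ ζ
      rw [IntermediateField.mem_bot] at hmem
      obtain ⟨y, hy⟩ := hmem
      have him : ζ.im = 0 := by
        rw [← hy]
        exact real_memQ _ (theta_im hn hζ) _ y.2
      exact zeta_im_ne hn hζ him
    have hpos : 0 < (minpoly ℚ⟮ζ + ζ⁻¹⟯ ζ).natDegree := minpoly.natDegree_pos hζintF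
    omega
  have htower := Module.finrank_mul_finrank ℚ ℚ⟮ζ + ζ⁻¹⟯ ℚ⟮ζ + ζ⁻¹⟯⟮ζ⟯
  rw [hdeg2, hfr, IntermediateField.adjoin.finrank hθint] at htower
  omega


lemma real_memZ (θ : ℂ) (h : θ.im = 0) :
    ∀ x ∈ Algebra.adjoin ℤ ({θ} : Set ℂ), Complex.im x = 0 := by
  intro x hx
  induction hx using Algebra.adjoin_induction with
  | mem z hz => rw [Set.mem_singleton_iff] at hz; rw [hz]; exact h
  | algebraMap r => simp
  | add a b _ _ ha hb => simp [ha, hb]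
  | mul a b _ _ ha hb => simp [Complex.mul_im, ha, hb]


set_option maxHeartbeats 1000000 in
/-- With the notation above, the `ℤ[ζₙ+ζₙ⁻¹]`-module
`M_{o₁,o₂} = ℤ[ζₙ+ζₙ⁻¹]·o₁/(αδ−βγ) + ℤ[ζₙ+ζₙ⁻¹]·o₂/(αδ−βγ)` is a ℤ-module
of rank `φ(n)` (as an abelian group). -/
theorem stmt14 (n : ℕ) (hn : 3 ≤ n) (ζ : ℂ) (hζ : IsPrimitiveRoot ζ n)
    (α β γ δ o₁ o₂ : ℂ)
    (hα : α ∈ Algebra.adjoin ℤ ({ζ + ζ⁻¹} : Set ℂ))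
    (hβ : β ∈ Algebra.adjoin ℤ ({ζ + ζ⁻¹} : Set ℂ))
    (hγ : γ ∈ Algebra.adjoin ℤ ({ζ + ζ⁻¹} : Set ℂ))
    (hδ : δ ∈ Algebra.adjoin ℤ ({ζ + ζ⁻¹} : Set ℂ))
    (ho₁ : o₁ = α + β * ζ) (ho₂ : o₂ = γ + δ * ζ)
    (ho₁0 : o₁ ≠ 0) (ho₂0 : o₂ ≠ 0)
    (hLI : LinearIndependent ℝ ![o₁, o₂])
    (M : Set ℂ)
    (hM : M = {z : ℂ | ∃ x ∈ Algebra.adjoin ℤ ({ζ + ζ⁻¹} : Set ℂ),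
      ∃ y ∈ Algebra.adjoin ℤ ({ζ + ζ⁻¹} : Set ℂ),
        z = x * (o₁ / (α * δ - β * γ)) + y * (o₂ / (α * δ - β * γ))}) :
    Module.rank ℤ (Submodule.span ℤ M) = Nat.totient n := by
  have hn0 : 0 < n := by omega
  have hθZ : IsIntegral ℤ (ζ + ζ⁻¹) := (hζ.isIntegral hn0).add (hζ.inv.isIntegral hn0)
  have hreal : ∀ x ∈ Algebra.adjoin ℤ ({ζ + ζ⁻¹} : Set ℂ), Complex.im x = 0 :=
    real_memZ _ (theta_im hn hζ)
  have hpair := LinearIndependent.pair_iff.1 hLI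
  have hpair' : ∀ x y : ℂ, x.im = 0 → y.im = 0 → x * o₁ + y * o₂ = 0 → x = 0 ∧ y = 0 := by
    intro x y hx hy hxy
    have hx' : (x.re : ℂ) = x := Complex.ext rfl (by simp [hx])
    have hy' : (y.re : ℂ) = y := Complex.ext rfl (by simp [hy])
    have h0 : x.re • o₁ + y.re • o₂ = 0 := by
      rw [Complex.real_smul, Complex.real_smul, hx', hy']; exact hxy
    obtain ⟨h1, h2⟩ := hpair x.re y.re h0
    constructor
    · rw [← hx', h1]; simp
    · rw [← hy', h2]; simp
  have hD : α * δ - β * γ ≠ 0 := by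
    intro hD0
    have hkey : δ * o₁ + (-β) * o₂ = 0 := by rw [ho₁, ho₂]; linear_combination hD0
    obtain ⟨hδ0, hβ0⟩ := hpair' δ (-β) (hreal δ hδ) (by simp [hreal β hβ]) hkey
    have hβ0' : β = 0 := neg_eq_zero.1 hβ0
    have hkey2 : γ * o₁ + (-α) * o₂ = 0 := by rw [ho₁, ho₂, hβ0', hδ0]; ring
    obtain ⟨hγ0, hα0⟩ := hpair' γ (-α) (hreal γ hγ) (by simp [hreal α hα]) hkey2
    apply ho₁0
    rw [ho₁, hβ0', neg_eq_zero.1 hα0]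
    ring
  -- the linear map from R × R
  let g₁ : Algebra.adjoin ℤ ({ζ + ζ⁻¹} : Set ℂ) →ₗ[ℤ] ℂ :=
    (o₁ / (α * δ - β * γ)) • (Algebra.adjoin ℤ ({ζ + ζ⁻¹} : Set ℂ)).val.toLinearMap
  let g₂ : Algebra.adjoin ℤ ({ζ + ζ⁻¹} : Set ℂ) →ₗ[ℤ] ℂ :=
    (o₂ / (α * δ - β * γ)) • (Algebra.adjoin ℤ ({ζ + ζ⁻¹} : Set ℂ)).val.toLinearMap
  let f : (Algebra.adjoin ℤ ({ζ + ζ⁻¹} : Set ℂ) × Algebra.adjoin ℤ ({ζ + ζ⁻¹} : Set ℂ)) →ₗ[ℤ] ℂ :=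
    g₁.comp (LinearMap.fst ℤ _ _) + g₂.comp (LinearMap.snd ℤ _ _)
  have hf : ∀ p, f p = (p.1 : ℂ) * (o₁ / (α * δ - β * γ)) + (p.2 : ℂ) * (o₂ / (α * δ - β * γ)) := by
    intro p
    show (o₁ / (α * δ - β * γ)) • (p.1 : ℂ) + (o₂ / (α * δ - β * γ)) • (p.2 : ℂ) = _
    rw [smul_eq_mul, smul_eq_mul]
    ring
  have hrange : Submodule.span ℤ M = LinearMap.range f := by
    apply le_antisymm
    · rw [Submodule.span_le]
      intro z hz
      rw [hM] at hz
      obtain ⟨x, hx, y, hy, rfl⟩ := hz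
      exact ⟨(⟨x, hx⟩, ⟨y, hy⟩), (hf _).trans rfl⟩
    · rintro z ⟨⟨x, y⟩, rfl⟩
      apply Submodule.subset_span
      rw [hM]
      exact ⟨x, x.2, y, y.2, hf (x, y)⟩
  have hinj : Function.Injective f := by
    rw [_root_.injective_iff_map_eq_zero]
    rintro ⟨x, y⟩ hp
    rw [hf] at hp
    have hp' : ((x : ℂ) * o₁ + (y : ℂ) * o₂) / (α * δ - β * γ) = 0 := by
      rw [← hp]; ring
    rw [_root_.div_eq_zero_iff] at hp'
    rcases hp' with hp' | hp'
    · obtain ⟨h1, h2⟩ := hpair' _ _ (hreal _ x.2) (hreal _ y.2) hp'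
      exact Prod.ext (Subtype.ext h1) (Subtype.ext h2)
    · exact absurd hp' hD
  rw [hrange, ← (LinearEquiv.ofInjective f hinj).rank_eq]
  haveI : Module.Free ℤ (Algebra.adjoin ℤ ({ζ + ζ⁻¹} : Set ℂ)) :=
    Module.Free.of_basis (Algebra.adjoin.powerBasis' hθZ).basis
  rw [rank_prod', rank_eq_card_basis (Algebra.adjoin.powerBasis' hθZ).basis]
  have hd : 2 * (minpoly ℤ (ζ + ζ⁻¹)).natDegree = n.totient := by
    have hq := deg_theta hn hζ
    have heq : minpoly ℚ (ζ + ζ⁻¹) = map (algebraMap ℤ ℚ) (minpoly ℤ (ζ + ζ⁻¹)) := by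
      simpa using minpoly.isIntegrallyClosed_eq_field_fractions ℚ ℂ hθZ
    rwa [heq, (minpoly.monic hθZ).natDegree_map] at hq
  rw [Fintype.card_fin, Algebra.adjoin.powerBasis'_dim]
  norm_cast
  omega
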